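/- Let 𝒢 be a finite groupoid and A a unital 𝒢-graded algebra over a field k, regarded as a left k𝒢*-module algebra via v_g · a = a_g. Let X = {v_g : g ∈ 𝒢} be the dual basis of k𝒢*, which is a split 𝒢-set via α=(X_g,α_g) with X_g = {v_h : r(h)=r(g)} and α_g(v_h) = v_{gh}. Then the map ψ : A # k𝒢* → A #_α^𝒢 X given by ψ(Σ_{d(g)=r(h)} a_g # v_h) = Σ_{d(g)=r(h)} a_g δ_{v_h} is an isomorphism of algebras, where A # k𝒢* = ⊕_{d(g)=r(h)} A_g ⊗ v_h is the weak smash product algebra. -/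
import Mathlib


open scoped Classical

noncomputable section

universe u v w

/-- A groupoid, presented as a set of morphisms with partially defined
composition.  `s g` is the domain (source) identity `d(g)`, `t g` the range
(target) identity `r(g)`; `mul g h` is the composite `gh`, meaningful when
`s g = t h`. -/
structure Gpd (G : Type u) where
  s : G → G
  t : G → G
  inv : G → G
  mul : G → G → G
  s_s : ∀ g, s (s g) = s g
  t_s : ∀ g, t (s g) = s g
  s_t : ∀ g, s (t g) = t g
  t_t : ∀ g, t (t g) = t g
  s_mul : ∀ g h, s g = t h → s (mul g h) = s h
  t_mul : ∀ g h, s g = t h → t (mul g h) = t g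
  mul_assoc : ∀ g h l, s g = t h → s h = t l → mul (mul g h) l = mul g (mul h l)
  mul_src : ∀ g, mul g (s g) = g
  tgt_mul : ∀ g, mul (t g) g = g
  s_inv : ∀ g, s (inv g) = t g
  t_inv : ∀ g, t (inv g) = s g
  inv_mul : ∀ g, mul (inv g) g = s g
  mul_inv : ∀ g, mul g (inv g) = t g

namespace Gpd

variable {G : Type u}

/-- `e` is an object (identity) of the groupoid. -/
def obj (𝒢 : Gpd G) (e : G) : Prop := 𝒢.s e = e

/-- The set `𝒢₀` of objects of the groupoid. -/
def Objs (𝒢 : Gpd G) : Set G := {e | 𝒢.obj e}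

end Gpd

/-- An action `α = (X_g, α_g)` of a groupoid `𝒢` on a set `X`:
`car g` is the subset `X_g` and `act g` restricts to the bijection
`α_g : X_{g⁻¹} → X_g`. -/
structure GpdSetAction {G : Type u} (𝒢 : Gpd G) (X : Type v) where
  car : G → Set X
  act : G → X → X
  car_t : ∀ g, car g = car (𝒢.t g)
  bijOn : ∀ g, Set.BijOn (act g) (car (𝒢.inv g)) (car g)
  act_id : ∀ e, 𝒢.obj e → ∀ x ∈ car e, act e x = x
  act_mul : ∀ g h, 𝒢.s g = 𝒢.t h → ∀ x ∈ car (𝒢.inv h),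
    act g (act h x) = act (𝒢.mul g h) x

/-- `X` is a split `𝒢`-set: `X` is the disjoint union of the `X_e`, `e ∈ 𝒢₀`. -/
def GpdSetAction.Split {G : Type u} {𝒢 : Gpd G} {X : Type v} (α : GpdSetAction 𝒢 X) : Prop :=
  ∀ x : X, ∃! e : G, 𝒢.obj e ∧ x ∈ α.car e

/-- The action is fully faithful: if `α_g` fixes some `x ∈ X_g ∩ X_{g⁻¹}`
then `g` is an identity. -/
def GpdSetAction.FullyFaithful {G : Type u} {𝒢 : Gpd G} {X : Type v}
    (α : GpdSetAction 𝒢 X) : Prop :=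
  ∀ g x, x ∈ α.car g ∩ α.car (𝒢.inv g) → α.act g x = x → 𝒢.obj g

/-- A `𝒢`-grading of the `k`-algebra `A`:  `A = ⊕_{g ∈ 𝒢} A_g` with
`A_g A_h ⊆ A_{gh}` for composable `g, h` and `A_g A_h = 0` otherwise. -/
structure GpdGrading {G : Type u} (𝒢 : Gpd G) (k : Type v) (A : Type w)
    [Field k] [Ring A] [Algebra k A] where
  comp : G → Submodule k A
  internal : DirectSum.IsInternal comp
  mul_mem : ∀ g h, 𝒢.s g = 𝒢.t h → ∀ a ∈ comp g, ∀ b ∈ comp h, a * b ∈ comp (𝒢.mul g h)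
  mul_eq_zero : ∀ g h, 𝒢.s g ≠ 𝒢.t h → ∀ a ∈ comp g, ∀ b ∈ comp h, a * b = 0

/-- The homogeneous component of degree `g` of `a ∈ A`. -/
noncomputable def GpdGrading.proj {G : Type u} {𝒢 : Gpd G} {k : Type v} {A : Type w}
    [Field k] [Ring A] [Algebra k A] (𝒜 : GpdGrading 𝒢 k A) (g : G) (a : A) : A :=
  ((Equiv.ofBijective _ 𝒜.internal).symm a g : A)

/-- `one : G → A` is a family of local units for the grading: each `one e`
(`e ∈ 𝒢₀`) is an identity element of `A_e` and `1_A = Σ_{e ∈ 𝒢₀} 1_e`. -/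
def IsIdFamily {G : Type u} {𝒢 : Gpd G} {k : Type v} {A : Type w}
    [Field k] [Ring A] [Algebra k A] (𝒜 : GpdGrading 𝒢 k A) (one : G → A) : Prop :=
  (∀ e, 𝒢.obj e → one e ∈ 𝒜.comp e ∧ ∀ a ∈ 𝒜.comp e, one e * a = a ∧ a * one e = a) ∧
  (1 : A) = ∑ᶠ e ∈ 𝒢.Objs, one e

/-- The multiplication of the smash product `A #_α^𝒢 X`, defined on the
ambient space of formal sums `Σ a_{(g,x)} δ_{(g,x)}`:
`(a δ_{(g,x)}) (b δ_{(h,y)}) = (a b) δ_{(gh, y)}` when `d(g) = r(h)` and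
`α_h(y) = x`, and `0` otherwise. -/
noncomputable def smashMul {G : Type u} {𝒢 : Gpd G} {X : Type v} {A : Type w} [Ring A]
    (α : GpdSetAction 𝒢 X) (f₁ f₂ : (G × X) →₀ A) : (G × X) →₀ A :=
  f₁.sum fun p a => f₂.sum fun q b =>
    if 𝒢.s p.1 = 𝒢.t q.1 ∧ α.act q.1 q.2 = p.2
    then Finsupp.single (𝒢.mul p.1 q.1, q.2) (a * b) else 0

/-- The underlying set of the smash product `A #_α^𝒢 X = ⊕_{g} ⊕_{x ∈ X_{d(g)}} A_g δ_x`: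
those formal sums whose `(g,x)`-coefficient lies in `A_g`, supported on pairs
with `x ∈ X_{d(g)}`. -/
def smashSet {G : Type u} {𝒢 : Gpd G} {X : Type v} {k : Type*} {A : Type w}
    [Field k] [Ring A] [Algebra k A]
    (α : GpdSetAction 𝒢 X) (𝒜 : GpdGrading 𝒢 k A) : Set ((G × X) →₀ A) :=
  {f | ∀ p : G × X, f p ∈ 𝒜.comp p.1 ∧ (f p ≠ 0 → p.2 ∈ α.car (𝒢.s p.1))}

/-- The identity element `Σ_{e ∈ 𝒢₀} Σ_{x ∈ X_e} 1_e δ_x` of the smash product. -/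
noncomputable def smashOne {G : Type u} {𝒢 : Gpd G} {X : Type v} {A : Type w} [Ring A]
    (α : GpdSetAction 𝒢 X) (one : G → A) : (G × X) →₀ A :=
  ∑ᶠ e ∈ 𝒢.Objs, ∑ᶠ x ∈ α.car e, Finsupp.single ((e, x) : G × X) (one e)

/-- The underlying set of the weak smash product
`A # k𝒢* = ⊕_{d(g) = r(h)} A_g ⊗ v_h`:  an element is stored as the finitely
supported function `F : 𝒢 → A` sending `h` to the coefficient
`Σ_g a_g ∈ ⊕_{d(g) = r(h)} A_g` of `v_h`. -/
def weakSmashSet {G : Type u} {𝒢 : Gpd G} {k : Type*} {A : Type w}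
    [Field k] [Ring A] [Algebra k A] (𝒜 : GpdGrading 𝒢 k A) : Set (G →₀ A) :=
  {F | ∀ h g, 𝒜.proj g (F h) ≠ 0 → 𝒢.s g = 𝒢.t h}

/-- The multiplication of the weak smash product `A # k𝒢*`, induced by
`(a # u)(b # w) = a (u₁ · b) # u₂ w` for the weak Hopf algebra `k𝒢*`: on the
basis, `(a # v_h)(b # v_l) = a · (v_{h l⁻¹} · b) # v_l` if `d(h) = d(l)` and
`0` otherwise, where `v_m · b = b_m` is the `m`-homogeneous component. -/
noncomputable def weakSmashMul {G : Type u} {𝒢 : Gpd G} {k : Type*} {A : Type w}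
    [Field k] [Ring A] [Algebra k A] (𝒜 : GpdGrading 𝒢 k A)
    (F₁ F₂ : G →₀ A) : G →₀ A :=
  F₂.sum fun l b => F₁.sum fun h a =>
    if 𝒢.s h = 𝒢.s l then Finsupp.single l (a * 𝒜.proj (𝒢.mul h (𝒢.inv l)) b) else 0

/-- The map `ψ : A # k𝒢* → A #_α^𝒢 X`, `ψ(Σ a_g # v_h) = Σ a_g δ_{v_h}`,
where `X = {v_g : g ∈ 𝒢}` is identified with `𝒢` via `v_g ↦ g`. -/
noncomputable def weakToSmash {G : Type u} {𝒢 : Gpd G} {k : Type*} {A : Type w}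
    [Field k] [Ring A] [Algebra k A] (𝒜 : GpdGrading 𝒢 k A)
    (F : G →₀ A) : (G × G) →₀ A :=
  F.sum fun h a => ∑ᶠ g : G, Finsupp.single ((g, h) : G × G) (𝒜.proj g a)

section Aux
variable {G : Type u} {𝒢 : Gpd G} {k : Type*} {A : Type w}
  [Field k] [Ring A] [Algebra k A] (𝒜 : GpdGrading 𝒢 k A)

lemma proj_eq_of_coe {a : A} {D : DirectSum G fun g => 𝒜.comp g}
    (h : DirectSum.coeAddMonoidHom 𝒜.comp D = a) (g : G) :
    𝒜.proj g a = D g := by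
  unfold GpdGrading.proj
  have hD : (Equiv.ofBijective _ 𝒜.internal).symm a = D := by
    rw [Equiv.symm_apply_eq]; exact h.symm
  rw [hD]

lemma proj_mem (g : G) (a : A) : 𝒜.proj g a ∈ 𝒜.comp g :=
  ((Equiv.ofBijective _ 𝒜.internal).symm a g).2

lemma proj_of_mem {g : G} {a : A} (ha : a ∈ 𝒜.comp g) (p : G) :
    𝒜.proj p a = if p = g then a else 0 := by
  have h : DirectSum.coeAddMonoidHom 𝒜.comp
      (DirectSum.of (fun g => 𝒜.comp g) g ⟨a, ha⟩) = a :=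
    DirectSum.coeAddMonoidHom_of _ _ _
  rw [proj_eq_of_coe 𝒜 h p, DirectSum.coe_of_apply]
  by_cases hgp : g = p
  · subst hgp; simp
  · rw [if_neg hgp, if_neg (fun hc => hgp hc.symm)]; simp

lemma proj_zero (p : G) : 𝒜.proj p (0 : A) = 0 := by
  rw [proj_of_mem 𝒜 (Submodule.zero_mem _) p, if_pos rfl]

lemma proj_add (p : G) (a b : A) :
    𝒜.proj p (a + b) = 𝒜.proj p a + 𝒜.proj p b := by
  have ha : DirectSum.coeAddMonoidHom 𝒜.comp
      ((Equiv.ofBijective _ 𝒜.internal).symm a) = a :=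
    (Equiv.ofBijective _ 𝒜.internal).apply_symm_apply a
  have hb : DirectSum.coeAddMonoidHom 𝒜.comp
      ((Equiv.ofBijective _ 𝒜.internal).symm b) = b :=
    (Equiv.ofBijective _ 𝒜.internal).apply_symm_apply b
  have hab : DirectSum.coeAddMonoidHom 𝒜.comp
      ((Equiv.ofBijective _ 𝒜.internal).symm a
        + (Equiv.ofBijective _ 𝒜.internal).symm b) = a + b := by
    rw [map_add, ha, hb]
  rw [proj_eq_of_coe 𝒜 hab p, DirectSum.add_apply, Submodule.coe_add]
  rfl

lemma sum_proj [Fintype G] (a : A) : ∑ g : G, 𝒜.proj g a = a := by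
  have ha : DirectSum.coeAddMonoidHom 𝒜.comp
      ((Equiv.ofBijective _ 𝒜.internal).symm a) = a :=
    (Equiv.ofBijective _ 𝒜.internal).apply_symm_apply a
  conv_rhs => rw [← ha, ← DirectSum.sum_univ_of ((Equiv.ofBijective _ 𝒜.internal).symm a)]
  rw [map_sum]
  simp only [DirectSum.coeAddMonoidHom_of]
  rfl

lemma proj_smul [Fintype G] (c : k) (p : G) (a : A) :
    𝒜.proj p (c • a) = c • 𝒜.proj p a := by
  set D := (Equiv.ofBijective _ 𝒜.internal).symm a with hDdef
  have ha : DirectSum.coeAddMonoidHom 𝒜.comp D = a :=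
    (Equiv.ofBijective _ 𝒜.internal).apply_symm_apply a
  have hca : DirectSum.coeAddMonoidHom 𝒜.comp (c • D) = c • a := by
    conv_lhs => rw [← DirectSum.sum_univ_of (c • D)]
    conv_rhs => rw [← ha, ← DirectSum.sum_univ_of D]
    rw [map_sum, map_sum, Finset.smul_sum]
    refine Finset.sum_congr rfl fun g _ => ?_
    rw [DirectSum.coeAddMonoidHom_of, DirectSum.coeAddMonoidHom_of, DFinsupp.smul_apply]
    rfl
  rw [proj_eq_of_coe 𝒜 hca p, DFinsupp.smul_apply]
  have : 𝒜.proj p a = D p := rfl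
  rw [this]
  rfl

lemma proj_sum (p : G) {ι : Type*} (s : Finset ι) (f : ι → A) :
    𝒜.proj p (∑ i ∈ s, f i) = ∑ i ∈ s, 𝒜.proj p (f i) :=
  map_sum (AddMonoidHom.mk' (𝒜.proj p) (proj_add 𝒜 p)) f s

lemma weakToSmash_apply [Fintype G] (F : G →₀ A) (p q : G) :
    weakToSmash 𝒜 F (p, q) = 𝒜.proj p (F q) := by
  unfold weakToSmash
  rw [Finsupp.sum_fintype _ _ (fun h => by simp [proj_zero])]
  rw [Finset.sum_apply']
  have key : ∀ h : G, (∑ᶠ g : G, Finsupp.single ((g, h) : G × G) (𝒜.proj g (F h))) (p, q)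
      = if h = q then 𝒜.proj p (F h) else 0 := by
    intro h
    rw [finsum_eq_sum_of_fintype, Finset.sum_apply']
    simp only [Finsupp.single_apply, Prod.mk.injEq]
    by_cases hq : h = q
    · subst hq
      simp
    · simp [hq]
  simp only [key]
  simp

lemma weakSmashMul_apply [Fintype G] (F₁ F₂ : G →₀ A) (q : G) :
    weakSmashMul 𝒜 F₁ F₂ q
      = ∑ h : G, if 𝒢.s h = 𝒢.s q then F₁ h * 𝒜.proj (𝒢.mul h (𝒢.inv q)) (F₂ q) else 0 := by
  unfold weakSmashMul
  rw [Finsupp.sum_fintype _ _ (fun l => by simp [proj_zero])]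
  have inner : ∀ l : G,
      (F₁.sum fun h a =>
        if 𝒢.s h = 𝒢.s l then Finsupp.single l (a * 𝒜.proj (𝒢.mul h (𝒢.inv l)) (F₂ l)) else 0)
      = ∑ h : G, (if 𝒢.s h = 𝒢.s l
          then Finsupp.single l (F₁ h * 𝒜.proj (𝒢.mul h (𝒢.inv l)) (F₂ l)) else 0) :=
    fun l => Finsupp.sum_fintype _ _ (fun h => by simp)
  simp only [inner]
  rw [Finset.sum_apply']
  simp only [Finset.sum_apply', apply_ite (fun f : G →₀ A => f q), Finsupp.single_apply,
    Finsupp.coe_zero, Pi.zero_apply]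
  rw [Finset.sum_comm]
  refine Finset.sum_congr rfl fun h _ => ?_
  have swap : ∀ l : G,
      (if 𝒢.s h = 𝒢.s l then (if l = q then F₁ h * 𝒜.proj (𝒢.mul h (𝒢.inv l)) (F₂ l) else 0) else 0)
        = if l = q then (if 𝒢.s h = 𝒢.s l then F₁ h * 𝒜.proj (𝒢.mul h (𝒢.inv l)) (F₂ l) else 0)
          else 0 := fun l => by split_ifs <;> rfl
  simp only [swap]
  simp

lemma smashMul_apply [Fintype G] (α : GpdSetAction 𝒢 G) (f₁ f₂ : (G × G) →₀ A) (z : G × G) :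
    smashMul α f₁ f₂ z = ∑ pr : G × G, ∑ qr : G × G,
      if (𝒢.s pr.1 = 𝒢.t qr.1 ∧ α.act qr.1 qr.2 = pr.2) ∧ (𝒢.mul pr.1 qr.1, qr.2) = z
      then f₁ pr * f₂ qr else 0 := by
  unfold smashMul
  rw [Finsupp.sum_fintype _ _ (fun pr => by simp)]
  have inner : ∀ pr : G × G,
      (f₂.sum fun qr b =>
        if 𝒢.s pr.1 = 𝒢.t qr.1 ∧ α.act qr.1 qr.2 = pr.2
        then Finsupp.single ((𝒢.mul pr.1 qr.1, qr.2) : G × G) (f₁ pr * b) else 0)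
      = ∑ qr : G × G, (if 𝒢.s pr.1 = 𝒢.t qr.1 ∧ α.act qr.1 qr.2 = pr.2
          then Finsupp.single ((𝒢.mul pr.1 qr.1, qr.2) : G × G) (f₁ pr * f₂ qr) else 0) :=
    fun pr => Finsupp.sum_fintype _ _ (fun qr => by simp)
  simp only [inner]
  rw [Finset.sum_apply']
  simp only [Finset.sum_apply', apply_ite (fun f : (G × G) →₀ A => f z), Finsupp.single_apply,
    Finsupp.coe_zero, Pi.zero_apply, ← ite_and]

lemma smashMul_psi_apply [Fintype G] (α : GpdSetAction 𝒢 G)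
    (hα₁ : ∀ g, α.car g = {h | 𝒢.t h = 𝒢.t g})
    (hα₂ : ∀ g, ∀ h ∈ α.car (𝒢.inv g), α.act g h = 𝒢.mul g h)
    {F₁ F₂ : G →₀ A} (hF₂ : F₂ ∈ weakSmashSet 𝒜) (p q : G) :
    smashMul α (weakToSmash 𝒜 F₁) (weakToSmash 𝒜 F₂) (p, q)
      = ∑ g : G, ∑ m : G,
        if 𝒢.s g = 𝒢.t m ∧ 𝒢.mul g m = p ∧ 𝒢.s m = 𝒢.t q
        then 𝒜.proj g (F₁ (𝒢.mul m q)) * 𝒜.proj m (F₂ q) else 0 := by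
  rw [smashMul_apply]
  rw [Fintype.sum_prod_type]
  refine Finset.sum_congr rfl fun g _ => ?_
  -- collapse the inner sums
  have step1 : ∀ x : G, ∑ qr : G × G,
      (if (𝒢.s g = 𝒢.t qr.1 ∧ α.act qr.1 qr.2 = x) ∧ ((𝒢.mul g qr.1, qr.2) : G × G) = (p, q)
        then weakToSmash 𝒜 F₁ (g, x) * weakToSmash 𝒜 F₂ qr else 0)
      = ∑ m : G, (if (𝒢.s g = 𝒢.t m ∧ α.act m q = x) ∧ 𝒢.mul g m = p
          then weakToSmash 𝒜 F₁ (g, x) * weakToSmash 𝒜 F₂ (m, q) else 0) := by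
    intro x
    rw [Fintype.sum_prod_type]
    refine Finset.sum_congr rfl fun m _ => ?_
    rw [Finset.sum_eq_single q]
    · refine if_congr ?_ rfl rfl
      simp only [Prod.mk.injEq]
      tauto
    · intro y _ hy
      rw [if_neg]
      rintro ⟨-, h2⟩
      exact hy (congrArg Prod.snd h2)
    · intro h; exact absurd (Finset.mem_univ q) h
  simp only [step1]
  rw [Finset.sum_comm]
  refine Finset.sum_congr rfl fun m _ => ?_
  rw [Finset.sum_eq_single (α.act m q)]
  · by_cases hz : 𝒜.proj m (F₂ q) = 0
    · rw [weakToSmash_apply 𝒜 F₂ m q]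
      split_ifs <;> simp [hz]
    · have hsm : 𝒢.s m = 𝒢.t q := hF₂ q m hz
      have hmem : q ∈ α.car (𝒢.inv m) := by
        rw [hα₁ (𝒢.inv m)]
        show 𝒢.t q = 𝒢.t (𝒢.inv m)
        rw [𝒢.t_inv]; exact hsm.symm
      have hact : α.act m q = 𝒢.mul m q := hα₂ m q hmem
      rw [weakToSmash_apply, weakToSmash_apply, hact]
      have hcond : (𝒢.s g = 𝒢.t m ∧ 𝒢.mul m q = 𝒢.mul m q) ∧ 𝒢.mul g m = p
          ↔ 𝒢.s g = 𝒢.t m ∧ 𝒢.mul g m = p ∧ 𝒢.s m = 𝒢.t q := by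
        constructor
        · rintro ⟨⟨h1, -⟩, h2⟩; exact ⟨h1, h2, hsm⟩
        · rintro ⟨h1, h2, -⟩; exact ⟨⟨h1, rfl⟩, h2⟩
      rw [if_congr hcond rfl rfl]
  · intro x _ hx
    rw [if_neg]
    rintro ⟨⟨-, h2⟩, -⟩
    exact hx h2.symm
  · intro h; exact absurd (Finset.mem_univ _) h

lemma weakToSmash_weakSmashMul_apply [Fintype G]
    {F₁ F₂ : G →₀ A} (hF₁ : F₁ ∈ weakSmashSet 𝒜) (p q : G) :
    weakToSmash 𝒜 (weakSmashMul 𝒜 F₁ F₂) (p, q)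
      = ∑ h : G, ∑ g : G,
        if 𝒢.s h = 𝒢.s q ∧ 𝒢.s g = 𝒢.t h ∧ 𝒢.mul g (𝒢.mul h (𝒢.inv q)) = p
        then 𝒜.proj g (F₁ h) * 𝒜.proj (𝒢.mul h (𝒢.inv q)) (F₂ q) else 0 := by
  rw [weakToSmash_apply, weakSmashMul_apply, proj_sum]
  refine Finset.sum_congr rfl fun h _ => ?_
  by_cases hsh : 𝒢.s h = 𝒢.s q
  · rw [if_pos hsh]
    conv_lhs => rw [← sum_proj 𝒜 (F₁ h), Finset.sum_mul]
    rw [proj_sum]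
    refine Finset.sum_congr rfl fun g _ => ?_
    by_cases hz : 𝒜.proj g (F₁ h) = 0
    · rw [hz, zero_mul, proj_zero]
      split_ifs <;> simp [hz]
    · have hgh : 𝒢.s g = 𝒢.t h := hF₁ h g hz
      have hcomp : 𝒢.s g = 𝒢.t (𝒢.mul h (𝒢.inv q)) := by
        rw [𝒢.t_mul h (𝒢.inv q) (by rw [𝒢.t_inv]; exact hsh)]
        exact hgh
      have hmem : 𝒜.proj g (F₁ h) * 𝒜.proj (𝒢.mul h (𝒢.inv q)) (F₂ q)
          ∈ 𝒜.comp (𝒢.mul g (𝒢.mul h (𝒢.inv q))) :=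
        𝒜.mul_mem _ _ hcomp _ (proj_mem 𝒜 _ _) _ (proj_mem 𝒜 _ _)
      rw [proj_of_mem 𝒜 hmem p]
      by_cases hp : 𝒢.mul g (𝒢.mul h (𝒢.inv q)) = p
      · rw [if_pos hp.symm, if_pos ⟨hsh, hgh, hp⟩]
      · rw [if_neg (fun hc => hp hc.symm), if_neg (fun hc => hp hc.2.2)]
  · rw [if_neg hsh, proj_zero]
    rw [Finset.sum_eq_zero]
    intro g _
    rw [if_neg (fun hc => hsh hc.1)]

lemma sum_reindex [Fintype G] (F₁ F₂ : G →₀ A) (p q : G) :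
    (∑ h : G, ∑ g : G,
      if 𝒢.s h = 𝒢.s q ∧ 𝒢.s g = 𝒢.t h ∧ 𝒢.mul g (𝒢.mul h (𝒢.inv q)) = p
      then 𝒜.proj g (F₁ h) * 𝒜.proj (𝒢.mul h (𝒢.inv q)) (F₂ q) else 0)
    = ∑ g : G, ∑ m : G,
      if 𝒢.s g = 𝒢.t m ∧ 𝒢.mul g m = p ∧ 𝒢.s m = 𝒢.t q
      then 𝒜.proj g (F₁ (𝒢.mul m q)) * 𝒜.proj m (F₂ q) else 0 := by
  rw [← Fintype.sum_prod_type' (f := fun h g =>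
      if 𝒢.s h = 𝒢.s q ∧ 𝒢.s g = 𝒢.t h ∧ 𝒢.mul g (𝒢.mul h (𝒢.inv q)) = p
      then 𝒜.proj g (F₁ h) * 𝒜.proj (𝒢.mul h (𝒢.inv q)) (F₂ q) else 0),
    ← Fintype.sum_prod_type' (f := fun g m =>
      if 𝒢.s g = 𝒢.t m ∧ 𝒢.mul g m = p ∧ 𝒢.s m = 𝒢.t q
      then 𝒜.proj g (F₁ (𝒢.mul m q)) * 𝒜.proj m (F₂ q) else 0)]
  rw [← Finset.sum_filter, ← Finset.sum_filter]
  refine Finset.sum_nbij' (fun hg => (hg.2, 𝒢.mul hg.1 (𝒢.inv q)))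
    (fun gm => (𝒢.mul gm.2 q, gm.1)) ?_ ?_ ?_ ?_ ?_
  · rintro ⟨h, g⟩ hmem
    simp only [Finset.mem_filter, Finset.mem_univ, true_and] at hmem ⊢
    obtain ⟨h1, h2, h3⟩ := hmem
    have hti : 𝒢.s h = 𝒢.t (𝒢.inv q) := by rw [𝒢.t_inv]; exact h1
    refine ⟨?_, h3, ?_⟩
    · rw [𝒢.t_mul h (𝒢.inv q) hti]; exact h2
    · rw [𝒢.s_mul h (𝒢.inv q) hti, 𝒢.s_inv]
  · rintro ⟨g, m⟩ hmem
    simp only [Finset.mem_filter, Finset.mem_univ, true_and] at hmem ⊢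
    obtain ⟨h1, h2, h3⟩ := hmem
    refine ⟨?_, ?_, ?_⟩
    · rw [𝒢.s_mul m q h3]
    · rw [𝒢.t_mul m q h3]; exact h1
    · rw [𝒢.mul_assoc m q (𝒢.inv q) h3 (by rw [𝒢.t_inv]), 𝒢.mul_inv,
        ← h3, 𝒢.mul_src]
      exact h2
  · rintro ⟨h, g⟩ hmem
    simp only [Finset.mem_filter, Finset.mem_univ, true_and] at hmem
    obtain ⟨h1, h2, h3⟩ := hmem
    have hti : 𝒢.s h = 𝒢.t (𝒢.inv q) := by rw [𝒢.t_inv]; exact h1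
    have : 𝒢.mul (𝒢.mul h (𝒢.inv q)) q = h := by
      rw [𝒢.mul_assoc h (𝒢.inv q) q hti (𝒢.s_inv q), 𝒢.inv_mul, ← h1, 𝒢.mul_src]
    simp [this]
  · rintro ⟨g, m⟩ hmem
    simp only [Finset.mem_filter, Finset.mem_univ, true_and] at hmem
    obtain ⟨h1, h2, h3⟩ := hmem
    have : 𝒢.mul (𝒢.mul m q) (𝒢.inv q) = m := by
      rw [𝒢.mul_assoc m q (𝒢.inv q) h3 (by rw [𝒢.t_inv]), 𝒢.mul_inv, ← h3, 𝒢.mul_src]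
    simp [this]
  · rintro ⟨h, g⟩ hmem
    simp only [Finset.mem_filter, Finset.mem_univ, true_and] at hmem
    obtain ⟨h1, h2, h3⟩ := hmem
    have hti : 𝒢.s h = 𝒢.t (𝒢.inv q) := by rw [𝒢.t_inv]; exact h1
    have : 𝒢.mul (𝒢.mul h (𝒢.inv q)) q = h := by
      rw [𝒢.mul_assoc h (𝒢.inv q) q hti (𝒢.s_inv q), 𝒢.inv_mul, ← h1, 𝒢.mul_src]
    simp [this]

end Aux

/-- Let `𝒢` be a finite groupoid, `A` a unital `𝒢`-graded
algebra over `k` (i.e. a left `k𝒢*`-module algebra via `v_g · a = a_g`) and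
`X = {v_g : g ∈ 𝒢}` the dual basis, a split `𝒢`-set via
`X_g = {v_h : r(h) = r(g)}` and `α_g(v_h) = v_{gh}`.  Then
`ψ : A # k𝒢* → A #_α^𝒢 X`, `ψ(Σ_{d(g)=r(h)} a_g # v_h) = Σ a_g δ_{v_h}`, is
an isomorphism of algebras. -/
theorem weak_smash_product_iso
    {G : Type u} (𝒢 : Gpd G) [Finite G]
    (k : Type*) (A : Type w) [Field k] [Ring A] [Algebra k A]
    (𝒜 : GpdGrading 𝒢 k A)
    -- `α` is the action of `𝒢` on `X = {v_g : g ∈ 𝒢}` by `α_g(v_h) = v_{gh}`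
    (α : GpdSetAction 𝒢 G)
    (hα₁ : ∀ g, α.car g = {h | 𝒢.t h = 𝒢.t g})
    (hα₂ : ∀ g, ∀ h ∈ α.car (𝒢.inv g), α.act g h = 𝒢.mul g h) :
    -- ψ is a bijection from `A # k𝒢*` onto `A #_α^𝒢 X`
    Set.BijOn (weakToSmash 𝒜) (weakSmashSet 𝒜) (smashSet α 𝒜) ∧
    -- ψ is k-linear
    (∀ F₁ ∈ weakSmashSet 𝒜, ∀ F₂ ∈ weakSmashSet 𝒜,
      weakToSmash 𝒜 (F₁ + F₂) = weakToSmash 𝒜 F₁ + weakToSmash 𝒜 F₂) ∧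
    (∀ (c : k), ∀ F ∈ weakSmashSet 𝒜, weakToSmash 𝒜 (c • F) = c • weakToSmash 𝒜 F) ∧
    -- ψ is multiplicative
    (∀ F₁ ∈ weakSmashSet 𝒜, ∀ F₂ ∈ weakSmashSet 𝒜,
      weakToSmash 𝒜 (weakSmashMul 𝒜 F₁ F₂)
        = smashMul α (weakToSmash 𝒜 F₁) (weakToSmash 𝒜 F₂)) := by
  haveI : Fintype G := Fintype.ofFinite G
  refine ⟨⟨?_, ?_, ?_⟩, ?_, ?_, ?_⟩
  · -- MapsTo
    intro F hF pr
    obtain ⟨p, q⟩ := pr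
    refine ⟨?_, ?_⟩
    · rw [weakToSmash_apply]
      exact proj_mem 𝒜 p (F q)
    · intro hne
      rw [weakToSmash_apply] at hne
      have hst : 𝒢.s p = 𝒢.t q := hF q p hne
      rw [hα₁ (𝒢.s p)]
      show 𝒢.t q = 𝒢.t (𝒢.s p)
      rw [𝒢.t_s]
      exact hst.symm
  · -- InjOn
    intro F₁ _ F₂ _ heq
    ext q
    have hp : ∀ p, 𝒜.proj p (F₁ q) = 𝒜.proj p (F₂ q) := fun p => by
      rw [← weakToSmash_apply 𝒜 F₁ p q, ← weakToSmash_apply 𝒜 F₂ p q, heq]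
    calc F₁ q = ∑ p : G, 𝒜.proj p (F₁ q) := (sum_proj 𝒜 _).symm
      _ = ∑ p : G, 𝒜.proj p (F₂ q) := by simp only [hp]
      _ = F₂ q := sum_proj 𝒜 _
  · -- SurjOn
    intro f hf
    set F : G →₀ A := Finsupp.equivFunOnFinite.symm (fun q => ∑ p : G, f (p, q)) with hFdef
    have hFa : ∀ q, F q = ∑ p : G, f (p, q) := fun q => rfl
    have hproj : ∀ g q, 𝒜.proj g (F q) = f (g, q) := fun g q => by
      rw [hFa, proj_sum,
        Finset.sum_congr rfl (fun p _ => proj_of_mem 𝒜 (hf (p, q)).1 g)]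
      simp
    refine ⟨F, ?_, ?_⟩
    · intro h g hne
      rw [hproj] at hne
      have hcar := (hf (g, h)).2 hne
      rw [hα₁ (𝒢.s g)] at hcar
      have : 𝒢.t h = 𝒢.t (𝒢.s g) := hcar
      rw [𝒢.t_s] at this
      exact this.symm
    · refine Finsupp.ext fun pr => ?_
      obtain ⟨p, q⟩ := pr
      rw [weakToSmash_apply, hproj]
  · -- additive
    intro F₁ _ F₂ _
    refine Finsupp.ext fun pr => ?_
    obtain ⟨p, q⟩ := pr
    rw [Finsupp.add_apply, weakToSmash_apply, weakToSmash_apply, weakToSmash_apply,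
      Finsupp.add_apply, proj_add]
  · -- smul
    intro c F _
    refine Finsupp.ext fun pr => ?_
    obtain ⟨p, q⟩ := pr
    rw [Finsupp.smul_apply, weakToSmash_apply, weakToSmash_apply, Finsupp.smul_apply,
      proj_smul]
  · -- multiplicative
    intro F₁ hF₁ F₂ hF₂
    refine Finsupp.ext fun pr => ?_
    obtain ⟨p, q⟩ := pr
    rw [weakToSmash_weakSmashMul_apply 𝒜 hF₁ p q,
      smashMul_psi_apply 𝒜 α hα₁ hα₂ hF₂ p q, sum_reindex]

end
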